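/- In an iterative reweighting algorithm where each iteration multiplies the total cost of all elements by a factor of at most 1 + 1/(3d) while multiplying the cost of a fixed set of 2d special elements by at least 1 + 1/(2d) (by doubling the cost of at least one special element each iteration, starting from unit costs on N elements), the algorithm must terminate within O(d log N) iterations, since otherwise the cost of the special set would exceed the total cost. -/

import Mathlib

/-- **Termination of the iterative reweighting algorithm.**  Elements of a finite
set `E` of size `N` start with unit costs; `D ⊆ E` is a distinguished set of `2d`
special elements.  In each of `steps` iterations, costs never decrease, the total
cost of all elements increases by a factor of at most `1 + 1/(3d)`, and the cost
of at least one distinguished element is doubled.  Then the algorithm terminates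
within `O(d log N)` iterations: `steps ≤ C·d·(log₂ N + 1)` for an absolute
constant `C`, since otherwise the cost of the distinguished set would exceed the
total cost. -/
theorem reweighting_terminates :
    ∃ C : ℕ, ∀ (ι : Type) (E D : Finset ι) (d N steps : ℕ)
      (cost : ℕ → ι → ℝ),
      1 ≤ d → 2 ≤ N → D ⊆ E → E.card = N → D.card = 2 * d →
      (∀ i ∈ E, cost 0 i = 1) →
      (∀ t < steps, ∀ i ∈ E, cost t i ≤ cost (t + 1) i) →
      (∀ t < steps, ∑ i ∈ E, cost (t + 1) i ≤
          (1 + 1 / (3 * (d : ℝ))) * ∑ i ∈ E, cost t i) →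
      (∀ t < steps, ∃ i ∈ D, cost (t + 1) i = 2 * cost t i) →
      steps ≤ C * d * (Nat.log 2 N + 1) := by
  use 100
  intro ι E D d N steps cost hd hN hDE hEcard hDcard h0 hmono htot hdbl
  rcases Nat.eq_zero_or_pos steps with hs0 | hs1
  · simp [hs0]
  have hd0 : (0:ℝ) < d := by exact_mod_cast hd
  have hN0 : (0:ℝ) < N := by positivity
  -- costs stay ≥ 1
  have hpos : ∀ t, t ≤ steps → ∀ i ∈ E, 1 ≤ cost t i := by
    intro t
    induction t with
    | zero => intro _ i hi; rw [h0 i hi]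
    | succ t ih =>
      intro ht i hi
      exact le_trans (ih (by omega) i hi) (hmono t (by omega) i hi)
  -- total cost bound
  have htotal : ∀ t, t ≤ steps →
      ∑ i ∈ E, cost t i ≤ (N:ℝ) * (1 + 1 / (3 * (d:ℝ)))^t := by
    intro t
    induction t with
    | zero =>
      intro _
      rw [Finset.sum_congr rfl h0]
      simp [hEcard]
    | succ t ih =>
      intro ht
      have h1 : (0:ℝ) ≤ 1 + 1 / (3 * (d:ℝ)) := by positivity
      calc ∑ i ∈ E, cost (t+1) i ≤ (1 + 1 / (3 * (d:ℝ))) * ∑ i ∈ E, cost t i :=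
            htot t (by omega)
        _ ≤ (1 + 1 / (3 * (d:ℝ))) * ((N:ℝ) * (1 + 1 / (3 * (d:ℝ)))^t) := by
            apply mul_le_mul_of_nonneg_left (ih (by omega)) h1
        _ = (N:ℝ) * (1 + 1 / (3 * (d:ℝ)))^(t+1) := by ring
  -- witness function
  have hDne : D.Nonempty := by
    rw [← Finset.card_pos, hDcard]; omega
  classical
  let f : ℕ → ι := fun t => if h : t < steps then (hdbl t h).choose else hDne.choose
  have hfD : ∀ t, f t ∈ D := by
    intro t
    by_cases h : t < steps
    · simp only [f, dif_pos h]; exact (hdbl t h).choose_spec.1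
    · simp only [f, dif_neg h]; exact hDne.choose_spec
  have hfdbl : ∀ t (h : t < steps), cost (t+1) (f t) = 2 * cost t (f t) := by
    intro t h
    simp only [f, dif_pos h]
    exact (hdbl t h).choose_spec.2
  -- pigeonhole
  set k := (steps - 1) / (2 * d) with hk
  obtain ⟨i, hiD, hik⟩ :=
    Finset.exists_lt_card_fiber_of_mul_lt_card_of_maps_to
      (s := Finset.range steps) (t := D) (f := f) (n := k)
      (fun t _ => hfD t)
      (by rw [hDcard, Finset.card_range]
          calc 2 * d * k = (steps - 1) / (2*d) * (2*d) := by rw [hk]; ring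
            _ ≤ steps - 1 := Nat.div_mul_le_self _ _
            _ < steps := by omega)
  set m := ((Finset.range steps).filter (fun t => f t = i)).card with hm
  have hiE : i ∈ E := hDE hiD
  -- 2d * m ≥ steps
  have hmd : steps ≤ 2 * d * m := by
    have h1 : k + 1 ≤ m := hik
    have h2 : 2 * d * (k + 1) = 2 * d * k + 2 * d := by ring
    have h3 : steps - 1 < 2 * d * (k + 1) := by
      have hdm := Nat.div_add_mod (steps - 1) (2*d)
      have hmod : (steps - 1) % (2*d) < 2*d := Nat.mod_lt _ (by omega)
      have hexp : 2 * d * (k + 1) = 2 * d * ((steps-1)/(2*d)) + 2 * d := by rw [hk]; ring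
      have hdm' : 2 * d * ((steps-1)/(2*d)) + (steps-1) % (2*d) = steps - 1 := by
        exact Nat.div_add_mod _ _
      omega
    calc steps ≤ 2 * d * (k + 1) := by omega
      _ ≤ 2 * d * m := Nat.mul_le_mul_left _ h1
  -- growth of cost of i
  have hgrow : ∀ t, t ≤ steps →
      (2:ℝ) ^ ((Finset.range t).filter (fun u => f u = i)).card ≤ cost t i := by
    intro t
    induction t with
    | zero => intro _; simp [h0 i hiE]
    | succ t ih =>
      intro ht
      have ht' : t < steps := by omega
      have hrange : Finset.range (t+1) = insert t (Finset.range t) := by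
        rw [Finset.range_add_one]
      by_cases hft : f t = i
      · have : ((Finset.range (t+1)).filter (fun u => f u = i)).card
            = ((Finset.range t).filter (fun u => f u = i)).card + 1 := by
          rw [hrange, Finset.filter_insert, if_pos hft,
            Finset.card_insert_of_notMem (by simp)]
        rw [this, pow_succ]
        have := hfdbl t ht'
        rw [hft] at this
        rw [this]
        nlinarith [ih (le_of_lt ht')]
      · have : ((Finset.range (t+1)).filter (fun u => f u = i)).card
            = ((Finset.range t).filter (fun u => f u = i)).card := by
          rw [hrange, Finset.filter_insert, if_neg hft]
        rw [this]
        exact le_trans (ih (le_of_lt ht')) (hmono t ht' i hiE)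
  -- combine: 2^m ≤ N * (1+1/(3d))^steps
  have hkey : (2:ℝ) ^ m ≤ (N:ℝ) * (1 + 1 / (3 * (d:ℝ)))^steps := by
    calc (2:ℝ) ^ m ≤ cost steps i := hgrow steps le_rfl
      _ ≤ ∑ j ∈ E, cost steps j := by
          apply Finset.single_le_sum (fun j hj => ?_) hiE
          exact le_trans zero_le_one (hpos steps le_rfl j hj)
      _ ≤ (N:ℝ) * (1 + 1 / (3 * (d:ℝ)))^steps := htotal steps le_rfl
  -- take logs
  have hy : (0:ℝ) < 1 + 1 / (3 * (d:ℝ)) := by positivity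
  have hlog := Real.log_le_log (by positivity) hkey
  rw [Real.log_pow, Real.log_mul (by positivity) (by positivity), Real.log_pow] at hlog
  have hlogy : Real.log (1 + 1 / (3 * (d:ℝ))) ≤ 1 / (3 * (d:ℝ)) := by
    have := Real.log_le_sub_one_of_pos hy
    linarith
  have hlog2lb := Real.log_two_gt_d9
  have hlog2ub := Real.log_two_lt_d9
  -- log N ≤ (L+1) * log 2
  set L := Nat.log 2 N with hL
  have hNlt : N < 2 ^ (L + 1) := Nat.lt_pow_succ_log_self (by norm_num) N
  have hlogN : Real.log N ≤ ((L:ℝ) + 1) * Real.log 2 := by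
    have h1 : (N:ℝ) ≤ (2:ℝ) ^ (L + 1) := by
      exact_mod_cast le_of_lt hNlt
    calc Real.log N ≤ Real.log ((2:ℝ) ^ (L + 1)) :=
          Real.log_le_log hN0 h1
      _ = ((L:ℝ) + 1) * Real.log 2 := by rw [Real.log_pow]; push_cast; ring
  have hlogN0 : (0:ℝ) ≤ Real.log N := by
    apply Real.log_nonneg
    exact_mod_cast le_trans (by norm_num) hN
  -- steps ≤ 2*d*m in ℝ
  have hmdR : (steps:ℝ) ≤ 2 * (d:ℝ) * m := by exact_mod_cast hmd
  -- m * log 2 ≤ log N + steps * (1/(3d))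
  have h1 : (m:ℝ) * Real.log 2 ≤ Real.log N + (steps:ℝ) * (1 / (3 * (d:ℝ))) := by
    have h2 : (steps:ℝ) * Real.log (1 + 1 / (3 * (d:ℝ)))
        ≤ (steps:ℝ) * (1 / (3 * (d:ℝ))) := by
      apply mul_le_mul_of_nonneg_left hlogy (by positivity)
    linarith
  -- steps * log 2 ≤ 2 d log N + (2/3) steps
  have h3 : (steps:ℝ) * Real.log 2 ≤ 2 * (d:ℝ) * Real.log N + (2/3) * steps := by
    have h4 : (steps:ℝ) * Real.log 2 ≤ 2 * (d:ℝ) * ((m:ℝ) * Real.log 2) := by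
      have := mul_le_mul_of_nonneg_right hmdR (le_of_lt (lt_trans (by norm_num) hlog2lb))
      linarith
    have h5 : 2 * (d:ℝ) * ((m:ℝ) * Real.log 2)
        ≤ 2 * (d:ℝ) * (Real.log N + (steps:ℝ) * (1 / (3 * (d:ℝ)))) := by
      apply mul_le_mul_of_nonneg_left h1 (by positivity)
    have h6 : 2 * (d:ℝ) * ((steps:ℝ) * (1 / (3 * (d:ℝ)))) = (2/3) * steps := by
      field_simp
    nlinarith
  -- conclude
  have hfin : (steps:ℝ) ≤ 100 * (d:ℝ) * ((L:ℝ) + 1) := by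
    have hs0 : (0:ℝ) ≤ steps := Nat.cast_nonneg _
    have hd1 : (1:ℝ) ≤ d := by exact_mod_cast hd
    have hL0 : (0:ℝ) ≤ (L:ℝ) + 1 := by positivity
    nlinarith [mul_le_mul_of_nonneg_left hlogN (by positivity : (0:ℝ) ≤ 2 * (d:ℝ))]
  have : (steps:ℝ) ≤ ((100 * d * (L + 1) : ℕ) : ℝ) := by push_cast; linarith
  exact_mod_cast this
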